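/- Let G be a group, R an integral domain, ρ : G → GL(l, R) a representation, φ : G → ℤⁿ a surjective homomorphism, C_* a bounded chain complex of finitely generated free right ℤ[G]-modules, and let k ≥ 0, q > 0. Then there is a finite family of proper full subgroups G_1, …, G_s of Hom(ℤⁿ, ℤ) such that for every nonzero homomorphism ξ : ℤⁿ → ℝ, factored as ξ = ξ̃ ∘ p_ξ with p_ξ : ℤⁿ → ℤᵐ surjective and ξ̃ : ℤᵐ → ℝ injective, the condition b_k(C_*, ρ; p_ξ) ≥ b_k°(C_*, ρ) + q holds if and only if ξ belongs to the union of the ℝ-linear spans of the G_i inside Hom(ℤⁿ, ℝ) (i.e. ξ ∈ ⋃_i G_i ⊗ ℝ). -/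

import Mathlib

/-- A finite free chain complex `0 ← C_0 ← C_1 ← ⋯ ← C_N ← 0` over a ring `T`,
recorded by the ranks `c k` of its finitely generated free chain modules and the
matrices of its boundary operators; `d k` is the matrix of `∂_{k+1} : C_{k+1} → C_k`. -/
structure FinFreeChainComplex (T : Type) [Ring T] where
  N : ℕ
  c : ℕ → ℕ
  bounded : ∀ k : ℕ, N < k → c k = 0
  d : ∀ k : ℕ, Matrix (Fin (c k)) (Fin (c (k + 1))) T
  dsq : ∀ k : ℕ, d k * d (k + 1) = 0

/-- The rank, over the fraction field `{U}` of `U`, of the matrix of `∂_{k+1}`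
with entries mapped by the ring homomorphism `φ : T →+* U`. -/
noncomputable def FinFreeChainComplex.bdryRank {T U : Type} [Ring T] [CommRing U]
    (C : FinFreeChainComplex T) (φ : T →+* U) (k : ℕ) : ℕ :=
  ((C.d k).map ⇑((algebraMap U (FractionRing U)).comp φ)).rank

/-- The rank, over `{U}`, of the matrix of `∂_k : C_k → C_{k-1}` (with `∂_0 = 0`)
with entries mapped by `φ`. -/
noncomputable def FinFreeChainComplex.bdryRankAt {T U : Type} [Ring T] [CommRing U]
    (C : FinFreeChainComplex T) (φ : T →+* U) (k : ℕ) : ℕ :=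
  match k with
  | 0 => 0
  | k' + 1 => C.bdryRank φ k'

/-- `b_k(C_*, φ) = dim_{{U}} H_k(C_* ⊗_φ {U}) = c_k − rk φ(∂_k) − rk φ(∂_{k+1})`. -/
noncomputable def FinFreeChainComplex.bettiMap {T U : Type} [Ring T] [CommRing U]
    (C : FinFreeChainComplex T) (φ : T →+* U) (k : ℕ) : ℕ :=
  C.c k - C.bdryRankAt φ k - C.bdryRank φ k

/-- `b_k(C_*) = dim_{{T}} H_k(C_* ⊗_T {T})`. -/
noncomputable def FinFreeChainComplex.betti {T : Type} [CommRing T]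
    (C : FinFreeChainComplex T) (k : ℕ) : ℕ :=
  C.bettiMap (RingHom.id T) k


/-- Flattening of a block matrix: a matrix of `l × l` matrices becomes an ordinary matrix. -/
def blockFlatten {a b l : ℕ} {S : Type}
    (M : Matrix (Fin a) (Fin b) (Matrix (Fin l) (Fin l) S)) :
    Matrix (Fin a × Fin l) (Fin b × Fin l) S :=
  Matrix.of fun ik jl => M ik.1 jl.1 ik.2 jl.2

/-- The ring homomorphism `ℤ[G] → Mat_l(S)` induced by a representation
`τ : G →* GL(l, S)`. -/
noncomputable def reprMatRingHom {G : Type} [Group G] {l : ℕ} {S : Type} [CommRing S]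
    (τ : G →* GL (Fin l) S) : MonoidAlgebra ℤ G →+* Matrix (Fin l) (Fin l) S :=
  ((MonoidAlgebra.lift ℤ (Matrix (Fin l) (Fin l) S) G)
    ((Units.coeHom (Matrix (Fin l) (Fin l) S)).comp τ)).toRingHom

/-- The rank over the fraction field `{S}` of the matrix of `∂_{k+1} ⊗ 1` in the
complex `C_* ⊗_{ℤ[G], τ} {S}^l`. -/
noncomputable def reprBdryRank {G : Type} [Group G] {l : ℕ} {S : Type} [CommRing S]
    (C : FinFreeChainComplex (MonoidAlgebra ℤ G)) (τ : G →* GL (Fin l) S) (k : ℕ) : ℕ :=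
  ((blockFlatten ((C.d k).map ⇑(reprMatRingHom τ))).map
    ⇑(algebraMap S (FractionRing S))).rank

/-- The rank over `{S}` of the matrix of `∂_k ⊗ 1` (with `∂_0 = 0`). -/
noncomputable def reprBdryRankAt {G : Type} [Group G] {l : ℕ} {S : Type} [CommRing S]
    (C : FinFreeChainComplex (MonoidAlgebra ℤ G)) (τ : G →* GL (Fin l) S) (k : ℕ) : ℕ :=
  match k with
  | 0 => 0
  | k' + 1 => reprBdryRank C τ k'

/-- `b_k(C_*, τ) = dim_{{S}} H_k(C_* ⊗_{ℤ[G], τ} {S}^l)` for a representation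
`τ : G →* GL(l, S)` into an integral domain `S`. -/
noncomputable def reprBetti {G : Type} [Group G] {l : ℕ} {S : Type} [CommRing S]
    (C : FinFreeChainComplex (MonoidAlgebra ℤ G)) (τ : G →* GL (Fin l) S) (k : ℕ) : ℕ :=
  C.c k * l - reprBdryRankAt C τ k - reprBdryRank C τ k

/-- The homomorphism `GL(l, S) →* GL(l, S')` induced by a ring homomorphism `S →+* S'`. -/
def glMap {l : ℕ} {S S' : Type} [CommRing S] [CommRing S'] (f : S →+* S') :
    GL (Fin l) S →* GL (Fin l) S' :=
  Units.map f.mapMatrix.toMonoidHom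

/-- The natural embedding of `Hom(ℤⁿ, ℤ)` into the real vector space `Hom(ℤⁿ, ℝ)`
(additive homomorphisms `ℤⁿ → ℝ`, viewed as `ℤ`-linear maps so as to carry an
`ℝ`-module structure). -/
def homToReal {n : ℕ} (h : (Fin n → ℤ) →+ ℤ) : (Fin n → ℤ) →ₗ[ℤ] ℝ :=
  ((Int.castAddHom ℝ).comp h).toIntLinearMap


section AuxMinor
open Matrix

section MinorRank
variable {L : Type} [Field L] {I J : Type} [Fintype I] [Fintype J]

lemma exists_li_cols (M : Matrix I J L) {t : ℕ} (ht : t ≤ M.rank) :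
    ∃ c : Fin t → J, LinearIndependent L (fun i => Mᵀ (c i)) := by
  classical
  obtain ⟨b, hbsub, hbspan, hbli⟩ := exists_linearIndependent L (Set.range Mᵀ)
  haveI : Fintype b := ((Set.finite_range Mᵀ).subset hbsub).fintype
  have hcard : t ≤ Fintype.card b := by
    have h1 : M.rank = Module.finrank L (Submodule.span L b) := by
      rw [rank_eq_finrank_span_cols, hbspan]
      rfl
    rw [finrank_span_set_eq_card hbli, Set.toFinset_card] at h1
    omega
  obtain ⟨f⟩ : Nonempty (Fin t ↪ b) :=
    Function.Embedding.nonempty_of_card_le (by simpa using hcard)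
  choose c hc using fun i : Fin t => hbsub (f i).2
  refine ⟨c, ?_⟩
  have heq : (fun i => Mᵀ (c i)) = Subtype.val ∘ f := by
    funext i; exact hc i
  rw [heq]
  exact hbli.comp f f.injective

lemma rank_eq_of_li_cols (N : Matrix I (Fin t) L) (h : LinearIndependent L (fun i => Nᵀ i)) :
    N.rank = t := by
  classical
  have hker : LinearMap.ker N.mulVecLin = ⊥ := by
    rw [LinearMap.ker_eq_bot']
    intro v hv
    have := Fintype.linearIndependent_iff.mp h v ?_
    · funext i; exact this i
    · rw [← hv]
      funext j
      simp [mulVecLin_apply, mulVec, dotProduct, Finset.sum_apply, mul_comm]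
  have := LinearMap.finrank_range_add_finrank_ker N.mulVecLin
  rw [hker, finrank_bot] at this
  simpa [Matrix.rank] using this

lemma rank_ge_iff_minor (M : Matrix I J L) (t : ℕ) :
    t ≤ M.rank ↔ ∃ (r : Fin t → I) (c : Fin t → J), (M.submatrix r c).det ≠ 0 := by
  classical
  constructor
  · intro ht
    obtain ⟨c, hc⟩ := exists_li_cols M ht
    set N : Matrix I (Fin t) L := M.submatrix id c with hN
    have hcols : LinearIndependent L (fun i => Nᵀ i) := by
      convert hc using 1
      rfl
    have hrN : N.rank = t := rank_eq_of_li_cols N hcols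
    have hrNT : t ≤ Nᵀ.rank := by rw [rank_transpose, hrN]
    obtain ⟨r, hr⟩ := exists_li_cols Nᵀ hrNT
    refine ⟨r, c, ?_⟩
    have hrows : LinearIndependent L (fun i => (M.submatrix r c) i) := by
      convert hr using 1
      rfl
    have : IsUnit (M.submatrix r c) := linearIndependent_rows_iff_isUnit.mp hrows
    exact ((isUnit_iff_isUnit_det _).mp this).ne_zero
  · rintro ⟨r, c, hdet⟩
    have hunit : IsUnit (M.submatrix r c) := (isUnit_iff_isUnit_det _).mpr hdet.isUnit
    have hrsub : (M.submatrix r c).rank = t := by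
      rw [rank_of_isUnit _ hunit, Fintype.card_fin]
    set E1 : Matrix (Fin t) I L := Matrix.of fun i j => if j = r i then 1 else 0
    set E2 : Matrix J (Fin t) L := Matrix.of fun j i => if j = c i then 1 else 0
    have hfact : M.submatrix r c = E1 * (M * E2) := by
      ext i i'
      simp [E1, E2, Matrix.mul_apply, Finset.sum_ite_eq, mul_comm]
    calc t = (M.submatrix r c).rank := hrsub.symm
    _ ≤ (M * E2).rank := by rw [hfact]; exact rank_mul_le_right _ _
    _ ≤ M.rank := rank_mul_le_left _ _

end MinorRank

end AuxMinor

section AuxGood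
open Finset

section Good
variable {R : Type} [CommRing R] {G' H : Type} [AddCommGroup G'] [AddCommGroup H]
  [DecidableEq G'] [DecidableEq H]

/-- zero-sum condition for a "collapse pattern" `c` on the support of `μ`. -/
def ZS (μ : G' →₀ R) (c : ↥μ.support → ↥μ.support) : Prop :=
  ∀ b, ∑ x ∈ univ.filter (fun x => c x = b), μ ↑x = 0

/-- subgroup generated by the differences collapsed by `c`. -/
def Ksub (μ : G' →₀ R) (c : ↥μ.support → ↥μ.support) : AddSubgroup G' :=
  AddSubgroup.closure (Set.range fun x : ↥μ.support => ((x : G') - ((c x : ↥μ.support) : G')))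

lemma mapDomain_coeff (f : G' → H) (v : G' →₀ R) (a : H) :
    Finsupp.mapDomain f v a = ∑ x ∈ v.support.filter (fun x => f x = a), v x := by
  classical
  rw [Finsupp.mapDomain, Finsupp.sum_apply, Finsupp.sum, sum_filter]
  refine Finset.sum_congr rfl fun x _ => ?_
  simp [Finsupp.single_apply]

lemma sum_filter_coe (s : Finset G') (P : G' → Prop) [DecidablePred P] (f : G' → R) :
    ∑ x ∈ s.filter P, f x = ∑ x ∈ univ.filter (fun y : ↥s => P ↑y), f ↑x := by
  rw [sum_filter, sum_filter, ← Finset.sum_coe_sort s (fun x => if P x then f x else 0)]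

lemma ksub_le_iff (μ : G' →₀ R) (c : ↥μ.support → ↥μ.support) (p : G' →+ H) :
    Ksub μ c ≤ p.ker ↔ ∀ x : ↥μ.support, p ↑x = p ↑(c x) := by
  rw [Ksub, AddSubgroup.closure_le]
  constructor
  · intro h x
    have := h (Set.mem_range_self x)
    have : p ((↑x : G') - ↑(c x)) = 0 := this
    rw [map_sub, sub_eq_zero] at this
    exact this
  · rintro h _ ⟨x, rfl⟩
    show p ((↑x : G') - ↑(c x)) = 0
    rw [map_sub, sub_eq_zero]
    exact h x

lemma good_iff (μ : G' →₀ R) (p : G' →+ H) :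
    Finsupp.mapDomain ⇑p μ = 0 ↔ ∃ c, ZS μ c ∧ Ksub μ c ≤ p.ker := by
  classical
  constructor
  · intro h
    -- canonical representative picker
    set F : H → Option ↥μ.support := fun a =>
      if h : ∃ y : ↥μ.support, p ↑y = a then some (Classical.choose h) else none with hF
    set c : ↥μ.support → ↥μ.support := fun x => (F (p ↑x)).getD x with hc
    have hFx : ∀ x : ↥μ.support, F (p ↑x) = some (Classical.choose (⟨x, rfl⟩ : ∃ y : ↥μ.support, p ↑y = p ↑x)) := by
      intro x; exact dif_pos _
    have hpc : ∀ x, p ↑(c x) = p ↑x := by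
      intro x
      rw [hc]; simp only [hFx x, Option.getD_some]
      exact Classical.choose_spec (⟨x, rfl⟩ : ∃ y : ↥μ.support, p ↑y = p ↑x)
    have hconst : ∀ x y : ↥μ.support, p ↑x = p ↑y → c x = c y := by
      intro x y hxy
      simp only [hc, hxy, hFx y, Option.getD_some]
    refine ⟨c, ?_, (ksub_le_iff μ c p).mpr (fun x : ↥μ.support => (hpc x).symm)⟩
    intro b
    by_cases hb : ∃ x, c x = b
    · obtain ⟨x₀, hx₀⟩ := hb
      have hpb : p ↑b = p ↑x₀ := by rw [← hx₀]; exact hpc x₀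
      have hfib : ∀ x, c x = b ↔ p ↑x = p ↑b := by
        intro x
        constructor
        · intro hx; rw [← hx]; exact (hpc x).symm
        · intro hx
          rw [← hx₀]
          apply hconst
          rw [hx, hpb]
      have : ∑ x ∈ univ.filter (fun x => c x = b), μ ↑x
          = ∑ x ∈ univ.filter (fun x : ↥μ.support => p ↑x = p ↑b), μ ↑x := by
        apply Finset.sum_congr _ (fun _ _ => rfl)
        ext x; simp [hfib x]
      rw [this, ← sum_filter_coe μ.support (fun x => p x = p ↑b) μ, ← mapDomain_coeff, h]
      rfl
    · rw [filter_false_of_mem, sum_empty]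
      intro x _
      exact fun hx => hb ⟨x, hx⟩
  · rintro ⟨c, hZS, hK⟩
    have hpc := (ksub_le_iff μ c p).mp hK
    ext a
    rw [mapDomain_coeff, sum_filter_coe μ.support (fun x => p x = a) μ]
    rw [Finsupp.coe_zero, Pi.zero_apply]
    rw [← Finset.sum_fiberwise_of_maps_to (g := c) (t := univ.filter (fun y : ↥μ.support => p ↑y = a)) ?_ (fun y => μ ↑y)]
    · refine Finset.sum_eq_zero fun b hb => ?_
      have hb' : p ↑b = a := by simpa using hb
      have : (univ.filter (fun y : ↥μ.support => p ↑y = a)).filter (fun x => c x = b)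
          = univ.filter (fun x => c x = b) := by
        ext x
        simp only [mem_filter, mem_univ, true_and]
        constructor
        · tauto
        · intro hx
          refine ⟨?_, hx⟩
          rw [← hb', ← hx]
          exact hpc x
      rw [this]
      exact hZS b
    · intro x hx
      simp only [mem_filter, mem_univ, true_and] at hx ⊢
      rw [← hpc x]
      exact hx

lemma ksub_ne_bot (μ : G' →₀ R) (hμ : μ ≠ 0) (c : ↥μ.support → ↥μ.support) (hZS : ZS μ c) :
    Ksub μ c ≠ ⊥ := by
  classical
  intro hbot
  have hcx : ∀ x, c x = x := by
    intro x
    have hm : ((↑x : G') - ↑(c x)) ∈ Ksub μ c :=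
      AddSubgroup.subset_closure (Set.mem_range_self x)
    rw [hbot, AddSubgroup.mem_bot, sub_eq_zero] at hm
    exact (Subtype.ext hm).symm
  obtain ⟨a, ha⟩ := Finsupp.ne_iff.mp hμ
  rw [Finsupp.coe_zero, Pi.zero_apply] at ha
  have hb := hZS ⟨a, Finsupp.mem_support_iff.mpr ha⟩
  rw [show (univ.filter (fun x => c x = ⟨a, Finsupp.mem_support_iff.mpr ha⟩)) = {⟨a, Finsupp.mem_support_iff.mpr ha⟩} from ?_] at hb
  · simp at hb
    exact ha hb
  · ext x
    simp [hcx x, eq_comm]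

lemma zs_of_zero (μ : G' →₀ R) (hμ : μ = 0) : ZS μ (fun x => x) ∧ ∀ p : G' →+ H, Ksub μ (fun x => x) ≤ p.ker := by
  constructor
  · intro b
    exact absurd b.2 (by simp [hμ])
  · intro p
    rw [ksub_le_iff]
    intro x
    exact absurd x.2 (by simp [hμ])
end Good

end AuxGood

section AuxAnn

lemma OrderIso.isCompl_of_map {α β : Type*} [Lattice α] [Lattice β] [BoundedOrder α]
    [BoundedOrder β] (e : α ≃o β) {a b : α} (h : IsCompl (e a) (e b)) : IsCompl a b := by
  constructor
  · rw [disjoint_iff]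
    apply e.injective
    rw [map_inf, e.map_bot]
    exact disjoint_iff.mp h.1
  · rw [codisjoint_iff]
    apply e.injective
    rw [map_sup, e.map_top]
    exact codisjoint_iff.mp h.2

section Ann
variable {n : ℕ}

/-- The annihilator of `K` inside `Hom(ℤⁿ, ℤ)`. -/
def AnnSub (K : AddSubgroup (Fin n → ℤ)) : AddSubgroup ((Fin n → ℤ) →+ ℤ) where
  carrier := {h | ∀ v ∈ K, h v = 0}
  add_mem' := by
    intro h1 h2 m1 m2 v hv
    simp [m1 v hv, m2 v hv]
  zero_mem' := by intro v hv; simp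
  neg_mem' := by
    intro h m v hv
    simp [m v hv]

lemma annsub_ne_top (K : AddSubgroup (Fin n → ℤ)) (hK : K ≠ ⊥) : AnnSub K ≠ ⊤ := by
  intro htop
  apply hK
  rw [AddSubgroup.eq_bot_iff_forall]
  intro v hv
  funext i
  have : (Pi.evalAddMonoidHom (fun _ : Fin n => ℤ) i) ∈ AnnSub K := htop ▸ AddSubgroup.mem_top _
  exact this v hv

noncomputable def dualB : Module.Basis (Fin n) ℤ ((Fin n → ℤ) →+ ℤ) :=
  ((Pi.basisFun ℤ (Fin n)).dualBasis).map (addMonoidHomLequivInt ℤ).symm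

-- SNF data for (toIntSubmodule K)
lemma ann_span_and_compl (K : AddSubgroup (Fin n → ℤ)) :
    (∃ K', IsCompl (AnnSub K) K') ∧
    ∀ ξ : (Fin n → ℤ) →+ ℝ,
      ((ξ.toIntLinearMap ∈ Submodule.span ℝ (homToReal '' (AnnSub K : Set ((Fin n → ℤ) →+ ℤ)))) ↔
        ∀ v ∈ K, ξ v = 0) := by
  classical
  obtain ⟨n', snf⟩ := Submodule.smithNormalForm (Pi.basisFun ℤ (Fin n)) (AddSubgroup.toIntSubmodule K)
  obtain ⟨bM, bN, f, a, hsnf⟩ := snf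
  have ha : ∀ i, a i ≠ 0 := by
    intro i hai
    have := hsnf i
    rw [hai, zero_smul] at this
    exact bN.ne_zero i (Subtype.ext this)
  -- the dual basis of bM, in AddMonoidHom form
  set DB : Module.Basis (Fin n) ℤ ((Fin n → ℤ) →+ ℤ) := bM.dualBasis.map (addMonoidHomLequivInt ℤ).symm with hDB
  have hDBapp : ∀ i v, DB i v = bM.repr v i := by
    intro i v
    simp [hDB, Module.Basis.dualBasis_apply]
  -- membership in K in terms of bN
  have hKmem : ∀ v : Fin n → ℤ, v ∈ K ↔ v ∈ AddSubgroup.toIntSubmodule K := fun _ => Iff.rfl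
  -- coordinates killed on K off the range of f
  have hDBann : ∀ i : Fin n, i ∉ Set.range f → DB i ∈ AnnSub K := by
    intro i hi v hv
    -- express v in terms of bN
    have hv' : v ∈ AddSubgroup.toIntSubmodule K := hv
    have hrepr : (⟨v, hv'⟩ : AddSubgroup.toIntSubmodule K) =
        ∑ j, bN.repr ⟨v, hv'⟩ j • bN j := (Module.Basis.sum_repr bN _).symm
    have : v = ∑ j, bN.repr ⟨v, hv'⟩ j • (a j • bM (f j)) := by
      have := congrArg (Subtype.val) hrepr
      simpa only [Submodule.coe_sum, Submodule.coe_smul, hsnf] using this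
    rw [this, map_sum]
    refine Finset.sum_eq_zero fun j _ => ?_
    rw [AddMonoidHom.map_zsmul, AddMonoidHom.map_zsmul, hDBapp, bM.repr_self,
      Finsupp.single_eq_of_ne (fun h => hi ⟨j, h.symm⟩)]
    simp
  -- any h in AnnSub K kills bM (f j)
  have hkill : ∀ h : (Fin n → ℤ) →+ ℤ, h ∈ AnnSub K → ∀ j : Fin n', h (bM (f j)) = 0 := by
    intro h hh j
    have hmem : (a j • bM (f j)) ∈ K := by
      rw [hKmem]
      rw [← hsnf j]
      exact (bN j).2
    have := hh _ hmem
    rw [AddMonoidHom.map_zsmul] at this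
    rcases smul_eq_zero.mp this with h1 | h2
    · exact absurd h1 (ha j)
    · exact h2
  -- expansion of any additive hom to a ℤ-module M₀ in the DB coordinates
  have hexp : ∀ (h : (Fin n → ℤ) →+ ℤ), h = ∑ i, h (bM i) • DB i := by
    intro h
    have : h.toIntLinearMap = ∑ i, h (bM i) • (bM.coord i) := by
      refine bM.ext fun j => ?_
      simp only [LinearMap.sum_apply, LinearMap.smul_apply, Module.Basis.coord_apply, bM.repr_self]
      rw [Finset.sum_eq_single j]
      · simp
      · intro i _ hij
        simp [Finsupp.single_eq_of_ne hij]
      · simp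
    apply AddMonoidHom.ext
    intro v
    have := congrArg (fun l => l v) this
    simpa [hDBapp, Module.Basis.coord_apply] using this
  constructor
  · -- complement
    refine ⟨(AddSubgroup.toIntSubmodule (M := (Fin n → ℤ) →+ ℤ)).symm
      (Submodule.span ℤ (DB '' (Set.range f))), ?_⟩
    have hann : AddSubgroup.toIntSubmodule (AnnSub K) =
        Submodule.span ℤ (DB '' (Set.range f)ᶜ) := by
      apply le_antisymm
      · intro h hh
        rw [hexp h]
        have hsplit : ∀ i : Fin n, h (bM i) • DB i ∈ Submodule.span ℤ (DB '' (Set.range f)ᶜ) := by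
          intro i
          by_cases hi : i ∈ Set.range f
          · obtain ⟨j, rfl⟩ := hi
            rw [hkill h hh j, zero_smul]
            exact Submodule.zero_mem _
          · exact Submodule.smul_mem _ _ (Submodule.subset_span ⟨i, hi, rfl⟩)
        exact Submodule.sum_mem _ fun i _ => hsplit i
      · rw [Submodule.span_le]
        rintro _ ⟨i, hi, rfl⟩
        exact hDBann i hi
    have hc : IsCompl (Submodule.span ℤ (DB '' (Set.range f)ᶜ))
        (Submodule.span ℤ (DB '' (Set.range f))) := by
      constructor
      · exact DB.linearIndependent.disjoint_span_image disjoint_compl_left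
      · rw [codisjoint_iff, ← Submodule.span_union, ← Set.image_union, Set.compl_union_self,
          Set.image_univ, DB.span_eq]
    refine (AddSubgroup.toIntSubmodule (M := (Fin n → ℤ) →+ ℤ)).isCompl_of_map ?_
    rw [AddSubgroup.toIntSubmodule.apply_symm_apply, hann]
    exact hc
  · intro ξ
    constructor
    · intro hmem v hv
      -- span of maps vanishing on K vanishes on K
      have hset : Submodule.span ℝ (homToReal '' (AnnSub K : Set ((Fin n → ℤ) →+ ℤ))) ≤
          { carrier := {ψ : (Fin n → ℤ) →ₗ[ℤ] ℝ | ∀ v ∈ K, ψ v = 0},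
            add_mem' := by intro ψ1 ψ2 m1 m2 w hw; simp [m1 w hw, m2 w hw],
            zero_mem' := by intro w hw; simp,
            smul_mem' := by intro r ψ m w hw; simp [m w hw] } := by
        rw [Submodule.span_le]
        rintro _ ⟨h, hh, rfl⟩ w hw
        simp [homToReal, hh w hw]
      exact hset hmem v hv
    · intro hvan
      -- expand ξ over the basis bM with real coefficients
      have hexpξ : ξ.toIntLinearMap = ∑ i, ξ (bM i) • homToReal (DB i) := by
        refine bM.ext fun j => ?_
        simp only [LinearMap.sum_apply, LinearMap.smul_apply]
        have : ∀ i, homToReal (DB i) (bM j) = ((bM.repr (bM j) i : ℤ) : ℝ) := by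
          intro i
          simp [homToReal, hDBapp]
        rw [Finset.sum_congr rfl (fun i _ => by rw [this i])]
        rw [Finset.sum_eq_single j]
        · simp [AddMonoidHom.toIntLinearMap]
        · intro i _ hij
          rw [bM.repr_self, Finsupp.single_eq_of_ne hij]
          simp
        · simp
      rw [hexpξ]
      refine Submodule.sum_mem _ fun i _ => ?_
      by_cases hi : i ∈ Set.range f
      · obtain ⟨j, rfl⟩ := hi
        have : ξ (bM (f j)) = 0 := by
          have hmem : (a j • bM (f j)) ∈ K := by
            rw [hKmem, ← hsnf j]
            exact (bN j).2
          have := hvan _ hmem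
          rw [AddMonoidHom.map_zsmul] at this
          have : ((a j : ℤ) : ℝ) • ξ (bM (f j)) = 0 := by
            simpa [zsmul_eq_mul] using this
          rcases smul_eq_zero.mp this with h1 | h2
          · exact absurd (by exact_mod_cast h1) (ha j)
          · exact h2
        rw [this, zero_smul]
        exact Submodule.zero_mem _
      · exact Submodule.smul_mem _ _ (Submodule.subset_span ⟨DB i, hDBann i hi, rfl⟩)

end Ann

end AuxAnn

section Funct
variable {G : Type} [Group G] {l : ℕ} {S S' : Type} [CommRing S] [CommRing S']

lemma reprMatRingHom_comp_glMap (τ : G →* GL (Fin l) S) (f : S →+* S') :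
    reprMatRingHom ((glMap f).comp τ) = (f.mapMatrix).comp (reprMatRingHom τ) := by
  apply MonoidAlgebra.ringHom_ext
  · intro b
    show (MonoidAlgebra.lift ℤ _ G) _ (MonoidAlgebra.single 1 b) =
      f.mapMatrix ((MonoidAlgebra.lift ℤ _ G) _ (MonoidAlgebra.single 1 b))
    rw [MonoidAlgebra.lift_single, MonoidAlgebra.lift_single]
    simp
  · intro a
    show (MonoidAlgebra.lift ℤ _ G) _ (MonoidAlgebra.single a 1) =
      f.mapMatrix ((MonoidAlgebra.lift ℤ _ G) _ (MonoidAlgebra.single a 1))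
    rw [MonoidAlgebra.lift_single, MonoidAlgebra.lift_single]
    simp only [one_smul]
    rfl

lemma blockFlatten_map {a b : ℕ} (X : Matrix (Fin a) (Fin b) (Matrix (Fin l) (Fin l) S))
    (f : S →+* S') : blockFlatten (X.map (f.mapMatrix)) = (blockFlatten X).map ⇑f := rfl

lemma blockFlatten_mul {a b c : ℕ} (X : Matrix (Fin a) (Fin b) (Matrix (Fin l) (Fin l) S))
    (Y : Matrix (Fin b) (Fin c) (Matrix (Fin l) (Fin l) S)) :
    blockFlatten (X * Y) = blockFlatten X * blockFlatten Y := by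
  ext ik jl
  simp only [blockFlatten, Matrix.of_apply, Matrix.mul_apply, Finset.sum_apply,
    Fintype.sum_prod_type]
  trans (∑ j : Fin b, (X ik.1 j * Y j jl.1) ik.2 jl.2)
  · simp [Matrix.sum_apply]
  · simp only [Matrix.mul_apply]

lemma blockFlatten_zero {a b : ℕ} :
    blockFlatten (0 : Matrix (Fin a) (Fin b) (Matrix (Fin l) (Fin l) S)) = 0 := rfl

end Funct


section Drop
variable {R : Type} [CommRing R] [IsDomain R] {n : ℕ} {I J : Type} [Fintype I] [Fintype J]
  [DecidableEq I] [DecidableEq J]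

noncomputable instance (m : ℕ) : IsDomain (AddMonoidAlgebra R (Fin m → ℤ)) :=
  NoZeroDivisors.to_isDomain _

noncomputable def rkGen {m : ℕ} (E : Matrix I J (AddMonoidAlgebra R (Fin n → ℤ)))
    (p : (Fin n → ℤ) →+ (Fin m → ℤ)) : ℕ :=
  ((E.map ⇑(AddMonoidAlgebra.mapDomainRingHom R p)).map
    ⇑(algebraMap (AddMonoidAlgebra R (Fin m → ℤ))
      (FractionRing (AddMonoidAlgebra R (Fin m → ℤ))))).rank

noncomputable def rk0 (E : Matrix I J (AddMonoidAlgebra R (Fin n → ℤ))) : ℕ :=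
  (E.map ⇑(algebraMap (AddMonoidAlgebra R (Fin n → ℤ))
      (FractionRing (AddMonoidAlgebra R (Fin n → ℤ))))).rank

lemma rkGen_ge_iff {m : ℕ} (E : Matrix I J (AddMonoidAlgebra R (Fin n → ℤ)))
    (p : (Fin n → ℤ) →+ (Fin m → ℤ)) (t : ℕ) :
    t ≤ rkGen E p ↔ ∃ (r : Fin t → I) (c : Fin t → J),
      (AddMonoidAlgebra.mapDomainRingHom R p) ((E.submatrix r c).det) ≠ 0 := by
  rw [rkGen, rank_ge_iff_minor]
  apply exists_congr; intro r
  apply exists_congr; intro c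
  rw [Matrix.submatrix_map, Matrix.submatrix_map]
  rw [show ((E.submatrix r c).map ⇑(AddMonoidAlgebra.mapDomainRingHom R p)).map
      ⇑(algebraMap (AddMonoidAlgebra R (Fin m → ℤ)) (FractionRing (AddMonoidAlgebra R (Fin m → ℤ))))
      = (algebraMap (AddMonoidAlgebra R (Fin m → ℤ))
          (FractionRing (AddMonoidAlgebra R (Fin m → ℤ)))).mapMatrix
        ((AddMonoidAlgebra.mapDomainRingHom R p).mapMatrix (E.submatrix r c)) from rfl]
  rw [← RingHom.map_det, ← RingHom.map_det]
  exact not_iff_not.mpr (map_eq_zero_iff _ (IsFractionRing.injective _ _))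

lemma rk0_ge_iff (E : Matrix I J (AddMonoidAlgebra R (Fin n → ℤ))) (t : ℕ) :
    t ≤ rk0 E ↔ ∃ (r : Fin t → I) (c : Fin t → J), (E.submatrix r c).det ≠ 0 := by
  rw [rk0, rank_ge_iff_minor]
  apply exists_congr; intro r
  apply exists_congr; intro c
  rw [Matrix.submatrix_map]
  rw [show (E.submatrix r c).map ⇑(algebraMap (AddMonoidAlgebra R (Fin n → ℤ))
        (FractionRing (AddMonoidAlgebra R (Fin n → ℤ))))
      = (algebraMap (AddMonoidAlgebra R (Fin n → ℤ))
          (FractionRing (AddMonoidAlgebra R (Fin n → ℤ)))).mapMatrix (E.submatrix r c) from rfl]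
  rw [← RingHom.map_det]
  exact not_iff_not.mpr (map_eq_zero_iff _ (IsFractionRing.injective _ _))

lemma rkGen_le_rk0 {m : ℕ} (E : Matrix I J (AddMonoidAlgebra R (Fin n → ℤ)))
    (p : (Fin n → ℤ) →+ (Fin m → ℤ)) : rkGen E p ≤ rk0 E := by
  obtain ⟨r, c, h⟩ := (rkGen_ge_iff E p (rkGen E p)).mp le_rfl
  exact (rk0_ge_iff E (rkGen E p)).mpr ⟨r, c, fun h0 => h (by rw [h0, map_zero])⟩

/-- characterization of "rank drops by at least `a`" by a finite family of subgroups -/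
def DropCharP {n : ℕ} (rf : ∀ m : ℕ, ((Fin n → ℤ) →+ (Fin m → ℤ)) → ℕ) (r0 : ℕ) : Prop :=
  (∀ m p, rf m p ≤ r0) ∧ ∀ a : ℕ, ∃ (W : Type) (_ : Finite W)
    (KK : W → AddSubgroup (Fin n → ℤ)),
    (1 ≤ a → ∀ w, KK w ≠ ⊥) ∧ ∀ (m : ℕ) (p : (Fin n → ℤ) →+ (Fin m → ℤ)),
      (rf m p + a ≤ r0 ↔ ∃ w, KK w ≤ p.ker)

lemma dropCharP_zero {n : ℕ} : DropCharP (n := n) (fun _ _ => 0) 0 := by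
  refine ⟨fun _ _ => le_rfl, fun a => ?_⟩
  rcases Nat.eq_zero_or_pos a with ha | ha
  · exact ⟨PUnit, inferInstance, fun _ => ⊥, by omega, fun m p => by
      simp [ha, exists_const]⟩
  · exact ⟨Empty, inferInstance, fun w => w.elim, fun _ w => w.elim, fun m p => by
      constructor
      · intro h; omega
      · rintro ⟨w, -⟩; exact w.elim⟩

lemma dropCharP_matrix (E : Matrix I J (AddMonoidAlgebra R (Fin n → ℤ))) :
    DropCharP (n := n) (fun m p => rkGen E p) (rk0 E) := by
  classical
  refine ⟨fun m p => rkGen_le_rk0 E p, fun a => ?_⟩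
  rcases Nat.eq_zero_or_pos a with ha | ha
  · refine ⟨PUnit, inferInstance, fun _ => ⊥, by omega, fun m p => ?_⟩
    constructor
    · intro _; exact ⟨PUnit.unit, bot_le⟩
    · intro _; rw [ha, Nat.add_zero]; exact rkGen_le_rk0 E p
  by_cases har : a ≤ rk0 E
  swap
  · refine ⟨Empty, inferInstance, fun w => w.elim, fun _ w => w.elim, fun m p => ?_⟩
    constructor
    · intro h; omega
    · rintro ⟨w, -⟩; exact w.elim
  -- main case
  set t := rk0 E - a + 1 with hts
  have ht1 : t ≤ rk0 E := by omega
  set RC := ((Fin t → I) × (Fin t → J)) with hRC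
  set minor : RC → AddMonoidAlgebra R (Fin n → ℤ) :=
    fun rc => (E.submatrix rc.1 rc.2).det with hminor
  set W := (∀ rc : RC, {cc : ↥(minor rc).coeff.support → ↥(minor rc).coeff.support // ZS (minor rc).coeff cc})
    with hW
  have : Finite W := by infer_instance
  refine ⟨W, this, fun w => ⨆ rc : RC, Ksub (minor rc).coeff (w rc).1, ?_, ?_⟩
  · intro _ w
    obtain ⟨r0c, c0c, hne⟩ := (rk0_ge_iff E t).mp ht1
    intro hbot
    have hle : Ksub (minor (r0c, c0c)).coeff (w (r0c, c0c)).1 ≤ ⊥ := by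
      rw [← hbot]
      exact le_iSup (fun rc => Ksub (minor rc).coeff (w rc).1) (r0c, c0c)
    exact ksub_ne_bot _ (fun h0 => hne (AddMonoidAlgebra.coeff_eq_zero.mp h0)) _ (w (r0c, c0c)).2 (le_bot_iff.mp hle)
  · intro m p
    have harith : rkGen E p + a ≤ rk0 E ↔ ¬ (t ≤ rkGen E p) := by omega
    rw [harith, rkGen_ge_iff]
    push_neg
    constructor
    · intro h
      have : ∀ rc : RC, ∃ cc, ZS (minor rc).coeff cc ∧ Ksub (minor rc).coeff cc ≤ p.ker := by
        intro rc
        exact (good_iff (minor rc).coeff p).mp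
          ((AddMonoidAlgebra.ofCoeff_eq_zero (x := Finsupp.mapDomain p (minor rc).coeff)).mp (h rc.1 rc.2))
      choose cc hcc1 hcc2 using this
      exact ⟨fun rc => ⟨cc rc, hcc1 rc⟩, iSup_le fun rc => hcc2 rc⟩
    · rintro ⟨w, hw⟩ r c
      refine (AddMonoidAlgebra.ofCoeff_eq_zero (x := Finsupp.mapDomain p (minor (r, c)).coeff)).mpr
          ((good_iff (minor (r, c)).coeff p).mpr ⟨(w (r, c)).1, (w (r, c)).2, ?_⟩)
      exact le_trans (le_iSup (fun rc => Ksub (minor rc).coeff (w rc).1) (r, c)) hw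

lemma dropCharP_add {n : ℕ} {rf1 rf2 : ∀ m : ℕ, ((Fin n → ℤ) →+ (Fin m → ℤ)) → ℕ}
    {r01 r02 : ℕ} (h1 : DropCharP rf1 r01) (h2 : DropCharP rf2 r02) (q : ℕ) (hq : 1 ≤ q) :
    ∃ (W : Type) (_ : Finite W) (KK : W → AddSubgroup (Fin n → ℤ)),
      (∀ w, KK w ≠ ⊥) ∧ ∀ (m : ℕ) (p : (Fin n → ℤ) →+ (Fin m → ℤ)),
        (rf1 m p + rf2 m p + q ≤ r01 + r02 ↔ ∃ w, KK w ≤ p.ker) := by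
  classical
  choose W1 hW1fin KK1 hKK1 hiff1 using h1.2
  choose W2 hW2fin KK2 hKK2 hiff2 using h2.2
  refine ⟨Σ a : Fin (q + 1), W1 a × W2 (q - a), ?_, fun w => KK1 _ w.2.1 ⊔ KK2 _ w.2.2, ?_, ?_⟩
  · haveI := fun a : Fin (q+1) => hW1fin a
    haveI := fun a : Fin (q+1) => hW2fin (q - a)
    infer_instance
  · rintro ⟨a, w1, w2⟩ hbot
    rw [sup_eq_bot_iff] at hbot
    rcases Nat.eq_zero_or_pos (a : ℕ) with ha | ha
    · exact hKK2 (q - a) (by omega) w2 hbot.2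
    · exact hKK1 a ha w1 hbot.1
  · intro m p
    constructor
    · intro h
      have b1 := h1.1 m p
      have b2 := h2.1 m p
      set a : ℕ := min q (r01 - rf1 m p) with hadef
      have haq : a ≤ q := min_le_left _ _
      have hc1 : rf1 m p + a ≤ r01 := by omega
      have hc2 : rf2 m p + (q - a) ≤ r02 := by omega
      obtain ⟨w1, hw1⟩ := (hiff1 a m p).mp hc1
      obtain ⟨w2, hw2⟩ := (hiff2 (q - a) m p).mp hc2
      refine ⟨⟨⟨a, by omega⟩, w1, w2⟩, sup_le hw1 hw2⟩
    · rintro ⟨⟨a, w1, w2⟩, hw⟩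
      have hw1 : KK1 a w1 ≤ p.ker := le_trans le_sup_left hw
      have hw2 : KK2 (q - a) w2 ≤ p.ker := le_trans le_sup_right hw
      have := (hiff1 a m p).mpr ⟨w1, hw1⟩
      have := (hiff2 (q - a) m p).mpr ⟨w2, hw2⟩
      have haq : (a : ℕ) ≤ q := by omega
      omega

end Drop


section MainAux
variable {G : Type} [Group G] {l : ℕ}

lemma dropCharP_congr {n : ℕ} {rf rf' : ∀ m : ℕ, ((Fin n → ℤ) →+ (Fin m → ℤ)) → ℕ}
    {r0 r0' : ℕ} (h : DropCharP rf r0) (he : ∀ m p, rf m p = rf' m p) (he0 : r0 = r0') :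
    DropCharP rf' r0' := by
  subst he0
  refine ⟨fun m p => (he m p) ▸ h.1 m p, fun a => ?_⟩
  obtain ⟨W, hfin, KK, hne, hiff⟩ := h.2 a
  exact ⟨W, hfin, KK, hne, fun m p => (he m p) ▸ hiff m p⟩

lemma rank_sum_le_general {A : Type} [CommRing A]
    (C : FinFreeChainComplex (MonoidAlgebra ℤ G)) (ρO : G →* GL (Fin l) A)
    {L : Type} [Field L] (ψ : A →+* L) (k' : ℕ) :
    ((blockFlatten ((C.d k').map ⇑(reprMatRingHom ρO))).map ⇑ψ).rank
      + ((blockFlatten ((C.d (k'+1)).map ⇑(reprMatRingHom ρO))).map ⇑ψ).rank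
      ≤ C.c (k'+1) * l := by
  have hmul : (blockFlatten ((C.d k').map ⇑(reprMatRingHom ρO))).map ⇑ψ *
      (blockFlatten ((C.d (k'+1)).map ⇑(reprMatRingHom ρO))).map ⇑ψ = 0 := by
    rw [← Matrix.map_mul, ← blockFlatten_mul, ← Matrix.map_mul, C.dsq k']
    rw [Matrix.map_zero _ (map_zero _), blockFlatten_zero, Matrix.map_zero _ (map_zero _)]
  have h := Matrix.rank_add_rank_le_card_of_mul_eq_zero hmul
  simpa using h

end MainAux

/-- for a representation `ρ : G → GL(l, R)` over an integral domain `R`, a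
surjection `φ : G → ℤⁿ`, the twisted representation `ρ°(g) = φ(g)·ρ(g)`, a bounded
complex `C_*` of f.g. free right `ℤ[G]`-modules, and `k ≥ 0`, `q > 0`, there is a finite
family of proper full subgroups `G_1, …, G_s` of `Hom(ℤⁿ, ℤ)` such that for every
nonzero `ξ : ℤⁿ → ℝ`, factored as `ξ = ξ̃ ∘ p_ξ` with `p_ξ : ℤⁿ → ℤᵐ` surjective and
`ξ̃ : ℤᵐ → ℝ` injective, one has `b_k(C_*, ρ; p_ξ) ≥ b_k°(C_*, ρ) + q` iff `ξ` lies in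
the union of the `ℝ`-linear spans of the `G_i` inside `Hom(ℤⁿ, ℝ)`. -/
theorem exists_jump_subgroups_novikov
    {G : Type} [Group G] {R : Type} [CommRing R] [IsDomain R] {n l : ℕ}
    (ρ : G →* GL (Fin l) R)
    (φ : G →* Multiplicative (Fin n → ℤ)) (hφ : Function.Surjective φ)
    (ρO : G →* GL (Fin l) (AddMonoidAlgebra R (Fin n → ℤ)))
    (hρO : ∀ g : G, (ρO g : Matrix (Fin l) (Fin l) (AddMonoidAlgebra R (Fin n → ℤ))) =
      AddMonoidAlgebra.single (Multiplicative.toAdd (φ g)) (1 : R) •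
        ((ρ g : Matrix (Fin l) (Fin l) R).map
          ⇑(algebraMap R (AddMonoidAlgebra R (Fin n → ℤ)))))
    (C : FinFreeChainComplex (MonoidAlgebra ℤ G)) (k : ℕ) (q : ℕ) (hq : 0 < q) :
    ∃ (s : ℕ) (Gs : Fin s → AddSubgroup ((Fin n → ℤ) →+ ℤ)),
      (∀ i, (∃ K, IsCompl (Gs i) K) ∧ Gs i ≠ ⊤) ∧
      ∀ (ξ : (Fin n → ℤ) →+ ℝ), ξ ≠ 0 →
        ∀ (m : ℕ) (pξ : (Fin n → ℤ) →+ (Fin m → ℤ)) (ξt : (Fin m → ℤ) →+ ℝ),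
          Function.Surjective pξ → Function.Injective ξt → ξ = ξt.comp pξ →
          (reprBetti C ρO k + q ≤
            reprBetti C ((glMap (AddMonoidAlgebra.mapDomainRingHom R pξ)).comp ρO) k ↔
          ∃ i, ξ.toIntLinearMap ∈
            Submodule.span ℝ (homToReal '' (Gs i : Set ((Fin n → ℤ) →+ ℤ)))) := by
  classical
  set A := AddMonoidAlgebra R (Fin n → ℤ) with hA
  haveI : IsDomain A := NoZeroDivisors.to_isDomain _
  set E : ∀ j : ℕ, Matrix (Fin (C.c j) × Fin l) (Fin (C.c (j+1)) × Fin l) A :=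
    fun j => blockFlatten ((C.d j).map ⇑(reprMatRingHom ρO)) with hE
  -- the twisted representation associated to p
  set τ' : ∀ m : ℕ, ((Fin n → ℤ) →+ (Fin m → ℤ)) → (G →* GL (Fin l) (AddMonoidAlgebra R (Fin m → ℤ))) :=
    fun m p => (glMap (AddMonoidAlgebra.mapDomainRingHom R p)).comp ρO with hτ'
  -- identification of boundary ranks
  have e2 : ∀ (j m : ℕ) (p : (Fin n → ℤ) →+ (Fin m → ℤ)),
      reprBdryRank C (τ' m p) j = rkGen (E j) p := by
    intro j m p
    rw [reprBdryRank, hτ', reprMatRingHom_comp_glMap, rkGen]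
    rw [show (C.d j).map ⇑((AddMonoidAlgebra.mapDomainRingHom R p).mapMatrix.comp (reprMatRingHom ρO))
        = ((C.d j).map ⇑(reprMatRingHom ρO)).map ⇑(AddMonoidAlgebra.mapDomainRingHom R p).mapMatrix
      from by rw [Matrix.map_map]; rfl]
    rw [blockFlatten_map]
  have e1 : ∀ j : ℕ, reprBdryRank C ρO j = rk0 (E j) := fun j => rfl
  -- DropCharP for the two degrees
  have hD2 : DropCharP (n := n) (fun m p => reprBdryRank C (τ' m p) k) (reprBdryRank C ρO k) :=
    dropCharP_congr (dropCharP_matrix (E k)) (fun m p => (e2 k m p).symm) (e1 k).symm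
  have hD1 : DropCharP (n := n) (fun m p => reprBdryRankAt C (τ' m p) k)
      (reprBdryRankAt C ρO k) := by
    match k with
    | 0 => exact dropCharP_zero
    | (k' + 1) =>
      exact dropCharP_congr (dropCharP_matrix (E k')) (fun m p => (e2 k' m p).symm) (e1 k').symm
  obtain ⟨W, hWfin, KK, hKKne, hiff⟩ := dropCharP_add hD1 hD2 q hq
  obtain ⟨s, ⟨e⟩⟩ := Finite.exists_equiv_fin W
  refine ⟨s, fun i => AnnSub (KK (e.symm i)), fun i =>
    ⟨(ann_span_and_compl (KK (e.symm i))).1, annsub_ne_top _ (hKKne (e.symm i))⟩, ?_⟩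
  intro ξ hξ m pξ ξt hpsurj hξtinj hfac
  -- rank sum bounds
  have hsum0 : reprBdryRankAt C ρO k + reprBdryRank C ρO k ≤ C.c k * l := by
    match k with
    | 0 =>
      rw [show reprBdryRankAt C ρO 0 = 0 from rfl, Nat.zero_add, reprBdryRank]
      have h := Matrix.rank_le_card_height
        ((blockFlatten ((C.d 0).map ⇑(reprMatRingHom ρO))).map
          ⇑(algebraMap A (FractionRing A)))
      simpa using h
    | (k' + 1) =>
      exact rank_sum_le_general C ρO (algebraMap A (FractionRing A)) k'
  have hsump : reprBdryRankAt C (τ' m pξ) k + reprBdryRank C (τ' m pξ) k ≤ C.c k * l := by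
    haveI : IsDomain (AddMonoidAlgebra R (Fin m → ℤ)) := NoZeroDivisors.to_isDomain _
    have hrw : ∀ j : ℕ, reprBdryRank C (τ' m pξ) j =
        ((blockFlatten ((C.d j).map ⇑(reprMatRingHom ρO))).map
          ⇑((algebraMap (AddMonoidAlgebra R (Fin m → ℤ))
              (FractionRing (AddMonoidAlgebra R (Fin m → ℤ)))).comp
            (AddMonoidAlgebra.mapDomainRingHom R pξ))).rank := by
      intro j
      rw [e2 j m pξ, rkGen]
      congr 1
    match k with
    | 0 =>
      rw [show reprBdryRankAt C (τ' m pξ) 0 = 0 from rfl, Nat.zero_add, hrw 0]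
      have h := Matrix.rank_le_card_height
        ((blockFlatten ((C.d 0).map ⇑(reprMatRingHom ρO))).map
          ⇑((algebraMap (AddMonoidAlgebra R (Fin m → ℤ))
              (FractionRing (AddMonoidAlgebra R (Fin m → ℤ)))).comp
            (AddMonoidAlgebra.mapDomainRingHom R pξ)))
      simpa using h
    | (k' + 1) =>
      rw [show reprBdryRankAt C (τ' m pξ) (k' + 1) = reprBdryRank C (τ' m pξ) k' from rfl,
        hrw k', hrw (k' + 1)]
      exact rank_sum_le_general C ρO _ k'
  -- the jump inequality in terms of boundary ranks
  have harith : (reprBetti C ρO k + q ≤ reprBetti C (τ' m pξ) k) ↔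
      (reprBdryRankAt C (τ' m pξ) k + reprBdryRank C (τ' m pξ) k + q ≤
        reprBdryRankAt C ρO k + reprBdryRank C ρO k) := by
    rw [show reprBetti C ρO k = C.c k * l - reprBdryRankAt C ρO k - reprBdryRank C ρO k from rfl,
      show reprBetti C (τ' m pξ) k
        = C.c k * l - reprBdryRankAt C (τ' m pξ) k - reprBdryRank C (τ' m pξ) k from rfl]
    omega
  rw [show (glMap (AddMonoidAlgebra.mapDomainRingHom R pξ)).comp ρO = τ' m pξ from rfl,
    harith, hiff m pξ]
  -- translate kernel conditions into span conditions
  rw [Equiv.exists_congr_left e]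
  apply exists_congr
  intro i
  have hker : KK (e.symm i) ≤ pξ.ker ↔ ∀ v ∈ KK (e.symm i), ξ v = 0 := by
    constructor
    · intro h v hv
      have h0 : pξ v = 0 := h hv
      rw [hfac]
      simp [h0]
    · intro h v hv
      have h0 : ξ v = 0 := h v hv
      rw [hfac] at h0
      have h1 : ξt (pξ v) = ξt 0 := by simpa using h0
      exact hξtinj h1
  rw [hker]
  exact ((ann_span_and_compl (KK (e.symm i))).2 ξ).symm
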